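/- Let G be a finite-dimensional real solvable Lie algebra whose derived ideal G¹ = [G,G] has dimension 2. Then the linear span A_G of the restricted adjoint operators {a_X : X ∈ G} inside End(G¹) has dimension at most 2. -/

import Mathlib

open Module

/-- The restriction to a Lie ideal `I` of the adjoint operator `ad X`,
as a linear endomorphism of `I`. -/
noncomputable def adRestrict {G : Type*} [LieRing G] [LieAlgebra ℝ G]
    (I : LieIdeal ℝ G) (X : G) : Module.End ℝ (I : Submodule ℝ G) :=
  (LieAlgebra.ad ℝ G X).restrict fun v hv => I.lie_mem hv

/-- The span `A_G` of the restricted adjoint operators inside `End(G¹)`. -/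
noncomputable def adSpan (G : Type*) [LieRing G] [LieAlgebra ℝ G] :
    Submodule ℝ (Module.End ℝ ((LieAlgebra.derivedSeries ℝ G 1 : LieIdeal ℝ G) : Submodule ℝ G)) :=
  Submodule.span ℝ (Set.range fun X : G => adRestrict (LieAlgebra.derivedSeries ℝ G 1) X)

section aux

variable {G : Type*} [LieRing G] [LieAlgebra ℝ G] (I : LieIdeal ℝ G)

lemma adRestrict_apply (X : G) (v : (I : Submodule ℝ G)) :
    (adRestrict I X v : G) = ⁅X, (v : G)⁆ := rfl

lemma adRestrict_bracket (x y : G) :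
    adRestrict I ⁅x, y⁆ = adRestrict I x * adRestrict I y - adRestrict I y * adRestrict I x := by
  ext v
  show ⁅⁅x, y⁆, (v : G)⁆ = _
  rw [LinearMap.sub_apply, Module.End.mul_apply, Module.End.mul_apply, AddSubgroupClass.coe_sub,
    adRestrict_apply, adRestrict_apply, adRestrict_apply, adRestrict_apply, lie_lie]

/-- `adRestrict` as a linear map in `X`. -/
noncomputable def adRestrictL : G →ₗ[ℝ] Module.End ℝ (I : Submodule ℝ G) where
  toFun := adRestrict I
  map_add' x y := by
    ext v
    show ⁅x + y, (v : G)⁆ = _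
    rw [LinearMap.add_apply]
    show _ = ⁅x, (v : G)⁆ + ⁅y, (v : G)⁆
    rw [add_lie]
  map_smul' c x := by
    ext v
    show ⁅c • x, (v : G)⁆ = _
    rw [RingHom.id_apply, LinearMap.smul_apply]
    show _ = c • ⁅x, (v : G)⁆
    rw [smul_lie]

variable [FiniteDimensional ℝ G]

/-- The trace of `a_z` vanishes for `z ∈ G¹`. -/
lemma trace_adRestrict_eq_zero {z : G} (hz : z ∈ LieAlgebra.derivedSeries ℝ G 1) :
    LinearMap.trace ℝ _ (adRestrict (LieAlgebra.derivedSeries ℝ G 1) z) = 0 := by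
  set I₁ : LieIdeal ℝ G := LieAlgebra.derivedSeries ℝ G 1 with hI
  have hz' : z ∈ (I₁ : Submodule ℝ G) := hz
  have hker : (I₁ : Submodule ℝ G) ≤
      LinearMap.ker ((LinearMap.trace ℝ _).comp (adRestrictL I₁)) := by
    have h1 : (I₁ : Submodule ℝ G) =
        Submodule.span ℝ { m | ∃ (x : (⊤ : LieIdeal ℝ G)) (n : (⊤ : LieIdeal ℝ G)),
          ⁅(x : G), (n : G)⁆ = m } := by
      rw [hI]
      exact LieSubmodule.lieIdeal_oper_eq_linear_span _ _
    refine le_trans (le_of_eq h1) ?_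
    rw [Submodule.span_le]
    rintro m ⟨x, n, rfl⟩
    simp only [SetLike.mem_coe, LinearMap.mem_ker, LinearMap.comp_apply]
    show LinearMap.trace ℝ _ (adRestrict I₁ ⁅(x : G), (n : G)⁆) = 0
    rw [adRestrict_bracket, map_sub, LinearMap.trace_mul_comm, sub_self]
  have := hker hz'
  exact this

end aux

section abelian

variable {G : Type*} [LieRing G] [LieAlgebra ℝ G] [FiniteDimensional ℝ G]

local notation "I₁" => LieAlgebra.derivedSeries ℝ G 1
local notation "V" => ((LieAlgebra.derivedSeries ℝ G 1 : LieIdeal ℝ G) : Submodule ℝ G)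

lemma abelian_of_finrank_two
    (h2 : Module.finrank ℝ (LieAlgebra.derivedSeries ℝ G 1) = 2) :
    ∀ x y : G, x ∈ I₁ → y ∈ I₁ → ⁅x, y⁆ = 0 := by
  have h2' : Module.finrank ℝ V = 2 := h2
  let b : Basis (Fin 2) ℝ V := finBasisOfFinrankEq ℝ V h2'
  -- the bracket of the two basis vectors, as an element of V
  set w : V := ⟨⁅((b 0 : V) : G), ((b 1 : V) : G)⁆,
    (LieAlgebra.derivedSeries ℝ G 1).lie_mem (b 1).2⟩ with hw
  -- trace computations
  have htr : ∀ z : G, z ∈ I₁ →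
      (b.repr (adRestrict I₁ z (b 0)) 0) + (b.repr (adRestrict I₁ z (b 1)) 1) = 0 := by
    intro z hz
    have := trace_adRestrict_eq_zero hz
    rw [LinearMap.trace_eq_matrix_trace ℝ b, Matrix.trace] at this
    simp only [Matrix.diag, Fin.sum_univ_two] at this
    rwa [LinearMap.toMatrix_apply, LinearMap.toMatrix_apply] at this
  have h00 : adRestrict I₁ ((b 0 : V) : G) (b 0) = 0 := by
    apply Subtype.ext
    rw [adRestrict_apply, lie_self]
    rfl
  have h01 : adRestrict I₁ ((b 0 : V) : G) (b 1) = w := by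
    apply Subtype.ext; rfl
  have h10 : adRestrict I₁ ((b 1 : V) : G) (b 0) = -w := by
    apply Subtype.ext
    show ⁅((b 1 : V) : G), ((b 0 : V) : G)⁆ = ((-w : V) : G)
    have hcoe : ((-w : V) : G) = -⁅((b 0 : V) : G), ((b 1 : V) : G)⁆ := rfl
    rw [hcoe, lie_skew]
  have h11 : adRestrict I₁ ((b 1 : V) : G) (b 1) = 0 := by
    apply Subtype.ext
    rw [adRestrict_apply, lie_self]
    rfl
  have hw1 : b.repr w 1 = 0 := by
    have := htr ((b 0 : V) : G) (b 0).2
    rw [h00, h01, LinearEquiv.map_zero] at this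
    simpa using this
  have hw0 : b.repr w 0 = 0 := by
    have := htr ((b 1 : V) : G) (b 1).2
    rw [h10, h11, LinearEquiv.map_zero, map_neg] at this
    simpa using this
  have hwz : w = 0 := by
    have : b.repr w = 0 := by
      ext i
      fin_cases i
      · exact hw0
      · exact hw1
    simpa using b.repr.map_eq_zero_iff.mp (by simpa using this)
  have key : ⁅((b 0 : V) : G), ((b 1 : V) : G)⁆ = 0 := by
    have := congrArg (Subtype.val) hwz
    simpa [hw] using this
  have key' : ⁅((b 1 : V) : G), ((b 0 : V) : G)⁆ = 0 := by
    rw [← lie_skew, key, neg_zero]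
  -- now expand arbitrary elements in the basis
  intro x y hx hy
  have hxr : x = b.repr ⟨x, hx⟩ 0 • ((b 0 : V) : G) + b.repr ⟨x, hx⟩ 1 • ((b 1 : V) : G) := by
    have := b.sum_repr ⟨x, hx⟩
    rw [Fin.sum_univ_two] at this
    have := congrArg Subtype.val this
    exact this.symm
  have hyr : y = b.repr ⟨y, hy⟩ 0 • ((b 0 : V) : G) + b.repr ⟨y, hy⟩ 1 • ((b 1 : V) : G) := by
    have := b.sum_repr ⟨y, hy⟩
    rw [Fin.sum_univ_two] at this
    have := congrArg Subtype.val this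
    exact this.symm
  rw [hxr, hyr]
  simp only [lie_add, add_lie, lie_smul, smul_lie, lie_self]
  rw [key, key']
  simp

end abelian

lemma finrank_le_two_of_le_span_pair {M : Type*} [AddCommGroup M] [Module ℝ M]
    {s : Submodule ℝ M} {x y : M} (h : s ≤ Submodule.span ℝ {x, y}) :
    Module.finrank ℝ s ≤ 2 := by
  have hrange : Set.range ![x, y] = {x, y} := by
    ext w
    constructor
    · rintro ⟨i, rfl⟩; fin_cases i <;> simp
    · rintro (rfl | rfl)
      · exact ⟨0, rfl⟩
      · exact ⟨1, rfl⟩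
  rw [← hrange] at h
  haveI : Module.Finite ℝ (Submodule.span ℝ (Set.range ![x, y])) :=
    FiniteDimensional.span_of_finite ℝ (Set.finite_range _)
  have h1 : Module.finrank ℝ s ≤ Module.finrank ℝ (Submodule.span ℝ (Set.range ![x, y])) :=
    Submodule.finrank_mono h
  have h2 := finrank_range_le_card (R := ℝ) ![x, y]
  unfold Set.finrank at h2
  simp only [Fintype.card_fin] at h2
  exact le_trans h1 h2

set_option maxHeartbeats 1000000 in
theorem finrank_adSpan_le_two
    (G : Type*) [LieRing G] [LieAlgebra ℝ G] [FiniteDimensional ℝ G]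
    [LieAlgebra.IsSolvable G]
    (h2 : Module.finrank ℝ (LieAlgebra.derivedSeries ℝ G 1) = 2) :
    Module.finrank ℝ (adSpan G) ≤ 2 := by
  classical
  set I₁ : LieIdeal ℝ G := LieAlgebra.derivedSeries ℝ G 1 with hI
  have hab := abelian_of_finrank_two (G := G) h2
  have h2' : Module.finrank ℝ ((LieAlgebra.derivedSeries ℝ G 1 : LieIdeal ℝ G) :
      Submodule ℝ G) = 2 := h2
  -- generators of `adSpan` commute
  have hgen : ∀ x y : G,
      adRestrict I₁ x * adRestrict I₁ y = adRestrict I₁ y * adRestrict I₁ x := by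
    intro x y
    have hmem : ⁅x, y⁆ ∈ I₁ :=
      LieSubmodule.lie_mem_lie (LieSubmodule.mem_top x) (LieSubmodule.mem_top y)
    have hb : adRestrict I₁ ⁅x, y⁆ = 0 := by
      ext v
      show ⁅⁅x, y⁆, (v : G)⁆ = ((0 : (I₁ : Submodule ℝ G)) : G)
      rw [hab ⁅x, y⁆ (v : G) hmem v.2]
      rfl
    have h := adRestrict_bracket I₁ x y
    rw [hb] at h
    exact sub_eq_zero.mp h.symm
  -- everything in `adSpan G` commutes
  have hcomm1 : ∀ B ∈ adSpan G, ∀ x : G,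
      adRestrict I₁ x * B = B * adRestrict I₁ x := by
    intro B hB x
    refine Submodule.span_induction
      (p := fun B _ => adRestrict I₁ x * B = B * adRestrict I₁ x) ?_ ?_ ?_ ?_ hB
    · rintro _ ⟨y, rfl⟩; exact hgen x y
    · rw [mul_zero, zero_mul]
    · intro f g _ _ hf hg; rw [mul_add, add_mul, hf, hg]
    · intro c f _ hf; rw [Algebra.mul_smul_comm, Algebra.smul_mul_assoc, hf]
  have hcomm : ∀ A ∈ adSpan G, ∀ B ∈ adSpan G, A * B = B * A := by
    intro A hA B hB
    refine Submodule.span_induction (p := fun A _ => A * B = B * A) ?_ ?_ ?_ ?_ hA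
    · rintro _ ⟨x, rfl⟩; exact hcomm1 B hB x
    · rw [mul_zero, zero_mul]
    · intro f g _ _ hf hg; rw [mul_add, add_mul, hf, hg]
    · intro c f _ hf; rw [Algebra.mul_smul_comm, Algebra.smul_mul_assoc, hf]
  by_cases hcase : ∃ A ∈ adSpan G, ∃ v : ((LieAlgebra.derivedSeries ℝ G 1 : LieIdeal ℝ G) :
      Submodule ℝ G), A v ∉ Submodule.span ℝ {v}
  · obtain ⟨A, hA, v, hv⟩ := hcase
    have hv0 : v ≠ 0 := by
      rintro rfl
      exact hv (by rw [map_zero]; exact Submodule.zero_mem _)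
    have hind : LinearIndependent ℝ ![v, A v] := by
      rw [LinearIndependent.pair_iff' hv0]
      intro a ha
      exact hv (ha ▸ Submodule.smul_mem _ a (Submodule.mem_span_singleton_self v))
    have hspan : Submodule.span ℝ (Set.range ![v, A v]) = ⊤ :=
      hind.span_eq_top_of_card_eq_finrank (by rw [Fintype.card_fin]; exact h2'.symm)
    have hrange : Set.range ![v, A v] = {v, A v} := by
      ext w
      constructor
      · rintro ⟨i, rfl⟩; fin_cases i
        · exact Set.mem_insert _ _
        · exact Set.mem_insert_of_mem _ rfl
      · rintro (rfl | rfl)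
        · exact ⟨0, rfl⟩
        · exact ⟨1, rfl⟩
    have hle : adSpan G ≤ Submodule.span ℝ
        {(1 : Module.End ℝ ((LieAlgebra.derivedSeries ℝ G 1 : LieIdeal ℝ G) :
          Submodule ℝ G)), A} := by
      intro B hB
      have hcom : A * B = B * A := hcomm A hA B hB
      obtain ⟨c, d, hcd⟩ : ∃ c d : ℝ, c • v + d • A v = B v := by
        apply Submodule.mem_span_pair.mp
        rw [← hrange, hspan]
        trivial
      set C := B - c • (1 : Module.End ℝ _) - d • A with hC
      have hCv : C v = 0 := by
        simp only [hC, LinearMap.sub_apply, LinearMap.smul_apply, Module.End.one_apply]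
        rw [← hcd]
        abel
      have hCA : C * A = A * C := by
        simp only [hC, sub_mul, mul_sub, smul_mul_assoc, mul_smul_comm, one_mul, mul_one, hcom]
      have hCAv : C (A v) = 0 := by
        have h1 : C (A v) = (C * A) v := rfl
        rw [h1, hCA]
        show A (C v) = 0
        rw [hCv, map_zero]
      have hC0 : C = 0 := by
        have hker : Submodule.span ℝ (Set.range ![v, A v]) ≤ LinearMap.ker C := by
          rw [Submodule.span_le]
          rintro _ ⟨i, rfl⟩
          fin_cases i
          · exact hCv
          · exact hCAv
        rw [hspan] at hker
        exact LinearMap.ker_eq_top.mp (top_le_iff.mp hker)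
      have hB' : B = c • (1 : Module.End ℝ _) + d • A := by
        rw [hC] at hC0
        have h2 : B - (c • (1 : Module.End ℝ _) + d • A) = 0 := by
          rw [← hC0]; abel
        exact sub_eq_zero.mp h2
      rw [hB']
      exact Submodule.add_mem _
        (Submodule.smul_mem _ _ (Submodule.subset_span (Set.mem_insert _ _)))
        (Submodule.smul_mem _ _ (Submodule.subset_span
          (Set.mem_insert_of_mem _ rfl)))
    exact finrank_le_two_of_le_span_pair hle
  · push_neg at hcase
    set b : Basis (Fin 2) ℝ ((LieAlgebra.derivedSeries ℝ G 1 : LieIdeal ℝ G) : Submodule ℝ G) :=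
      finBasisOfFinrankEq ℝ _ h2' with hb
    have hle : adSpan G ≤ Submodule.span ℝ
        {(1 : Module.End ℝ ((LieAlgebra.derivedSeries ℝ G 1 : LieIdeal ℝ G) :
          Submodule ℝ G))} := by
      intro A hA
      obtain ⟨c0, h0⟩ := Submodule.mem_span_singleton.mp (hcase A hA (b 0))
      obtain ⟨c1, h1⟩ := Submodule.mem_span_singleton.mp (hcase A hA (b 1))
      obtain ⟨c, hcc⟩ := Submodule.mem_span_singleton.mp (hcase A hA (b 0 + b 1))
      have heq : (c - c0) • b 0 + (c - c1) • b 1 = 0 := by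
        rw [sub_smul, sub_smul]
        have : c • (b 0 + b 1) = c0 • b 0 + c1 • b 1 := by
          rw [hcc, map_add, ← h0, ← h1]
        rw [smul_add] at this
        rw [show c • b 0 - c0 • b 0 + (c • b 1 - c1 • b 1)
            = (c • b 0 + c • b 1) - (c0 • b 0 + c1 • b 1) by abel, this, sub_self]
      have hcoef := Fintype.linearIndependent_iff.mp b.linearIndependent
        ![c - c0, c - c1] (by rwa [Fin.sum_univ_two])
      have e0 : c - c0 = 0 := hcoef 0
      have e1 : c - c1 = 0 := hcoef 1
      have hc10 : c1 = c0 := by linarith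
      have hA1 : A = c0 • (1 : Module.End ℝ _) := by
        apply b.ext
        intro i
        fin_cases i
        · show A (b 0) = (c0 • (1 : Module.End ℝ _)) (b 0)
          rw [← h0, LinearMap.smul_apply, Module.End.one_apply]
        · show A (b 1) = (c0 • (1 : Module.End ℝ _)) (b 1)
          rw [← h1, hc10, LinearMap.smul_apply, Module.End.one_apply]
      rw [hA1]
      exact Submodule.smul_mem _ _ (Submodule.mem_span_singleton_self _)
    refine finrank_le_two_of_le_span_pair (x := (1 : Module.End ℝ
        ((LieAlgebra.derivedSeries ℝ G 1 : LieIdeal ℝ G) : Submodule ℝ G)))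
      (y := (1 : Module.End ℝ ((LieAlgebra.derivedSeries ℝ G 1 : LieIdeal ℝ G) :
        Submodule ℝ G))) ?_
    rwa [Set.pair_eq_singleton]
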